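/- arXiv:1904.09056 — 2 statements merged into one kernel-verified Lean document; each statement's English description precedes it below -/
import Mathlib

section
/- Let (Ω, F, (F_t)_{t≥0}, P) be a filtered probability space, M ≥ 1 an integer, and a ∈ (0,1). Let (Q(t))_{t≥0} be an adapted integer-valued process with Q(0) = 0 and Q(t+1) − Q(t) ∈ {0,1}, such that almost surely P(Q(t+1) = Q(t) + 1 | F_t) ≤ a^{Q(t)/M − 1} for every t ≥ 0. Then for every integer T ≥ 0: E[a^{−Q(T)/M}] ≤ a^{−1}·(a^{−1/M} − 1)·T + 1. -/
open MeasureTheory ProbabilityTheory Real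

/-- If `(Q(t))` is an adapted counting process with `Q(0) = 0`, increments in `{0,1}`, and
`P(Q(t+1) = Q(t)+1 | F_t) ≤ a^{Q(t)/M − 1}` a.s. for every `t`, then for every `T ≥ 0`:
`E[a^{−Q(T)/M}] ≤ a⁻¹(a^{−1/M} − 1) T + 1`. -/
theorem statement9 {Ω : Type*} {m0 : MeasurableSpace Ω} (μ : Measure Ω)
    [IsProbabilityMeasure μ] (ℱ : Filtration ℕ m0)
    (M : ℕ) (hM : 1 ≤ M) (a : ℝ) (ha0 : 0 < a) (ha1 : a < 1)
    (Q : ℕ → Ω → ℕ) (hadapt : ∀ t, Measurable[ℱ t] (Q t))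
    (hQ0 : ∀ ω, Q 0 ω = 0)
    (hstep : ∀ t ω, Q (t + 1) ω = Q t ω ∨ Q (t + 1) ω = Q t ω + 1)
    (hcond : ∀ t, ∀ᵐ ω ∂μ,
      (μ[(fun ω' => if Q (t + 1) ω' = Q t ω' + 1 then (1 : ℝ) else 0)|ℱ t]) ω ≤
        a ^ ((Q t ω : ℝ) / (M : ℝ) - 1)) :
    ∀ T : ℕ, ∫ ω, a ^ (-((Q T ω : ℝ) / (M : ℝ))) ∂μ ≤
      a⁻¹ * (a ^ (-(1 / (M : ℝ))) - 1) * (T : ℝ) + 1 := by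
  -- notation
  set c : ℝ := a⁻¹ * (a ^ (-(1 / (M : ℝ))) - 1) with hc
  set X : ℕ → Ω → ℝ := fun t ω => a ^ (-((Q t ω : ℝ) / (M : ℝ))) with hX
  have hMpos : (0 : ℝ) < M := by positivity
  -- Q t ω ≤ t
  have hQle : ∀ t ω, Q t ω ≤ t := by
    intro t
    induction t with
    | zero => intro ω; simp [hQ0 ω]
    | succ n ih =>
      intro ω
      have := ih ω
      rcases hstep n ω with h | h <;> omega
  -- X t measurable wrt ℱ t
  have hXmeas : ∀ t, Measurable[ℱ t] (X t) := by
    intro t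
    exact (measurable_from_top (f := fun n : ℕ => a ^ (-((n : ℝ) / (M : ℝ))))).comp (hadapt t)
  -- X t nonneg and bounded
  have hXpos : ∀ t ω, 0 < X t ω := fun t ω => Real.rpow_pos_of_pos ha0 _
  have hXbd : ∀ t ω, X t ω ≤ a ^ (-((t : ℝ) / (M : ℝ))) := by
    intro t ω
    apply Real.rpow_le_rpow_of_exponent_ge ha0 ha1.le
    have h1 : (Q t ω : ℝ) ≤ (t : ℝ) := by exact_mod_cast hQle t ω
    have h2 : (Q t ω : ℝ) / (M : ℝ) ≤ (t : ℝ) / (M : ℝ) := by gcongr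
    linarith
  -- integrability of X t
  have hXint : ∀ t, Integrable (X t) μ := by
    intro t
    refine Integrable.mono' (integrable_const (a ^ (-((t : ℝ) / (M : ℝ)))))
      ((hXmeas t).mono (ℱ.le t) le_rfl).aestronglyMeasurable ?_
    filter_upwards with ω
    rw [Real.norm_eq_abs, abs_of_pos (hXpos t ω)]
    exact hXbd t ω
  -- indicator
  set I : ℕ → Ω → ℝ := fun t ω => if Q (t + 1) ω = Q t ω + 1 then (1 : ℝ) else 0 with hI
  have hImeas : ∀ t, Measurable (I t) := by
    intro t
    have h1 : Measurable (Q (t + 1)) := (hadapt (t + 1)).mono (ℱ.le (t + 1)) le_rfl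
    have h2 : Measurable (Q t) := (hadapt t).mono (ℱ.le t) le_rfl
    have hset : MeasurableSet {ω | Q (t + 1) ω = Q t ω + 1} :=
      measurableSet_eq_fun h1 (h2.add_const 1)
    exact Measurable.ite hset measurable_const measurable_const
  have hIint : ∀ t, Integrable (I t) μ := by
    intro t
    refine Integrable.mono' (integrable_const 1) (hImeas t).aestronglyMeasurable ?_
    filter_upwards with ω
    by_cases h : Q (t + 1) ω = Q t ω + 1 <;> simp [hI, h]
  have hXIint : ∀ t, Integrable (fun ω => X t ω * I t ω) μ := by
    intro t
    refine Integrable.mono' (integrable_const (a ^ (-((t : ℝ) / (M : ℝ)))))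
      (((hXmeas t).mono (ℱ.le t) le_rfl).mul (hImeas t)).aestronglyMeasurable ?_
    filter_upwards with ω
    rw [Real.norm_eq_abs]
    by_cases h : Q (t + 1) ω = Q t ω + 1
    · simp only [hI, if_pos h, mul_one]
      rw [abs_of_pos (hXpos t ω)]; exact hXbd t ω
    · simp only [hI, if_neg h, mul_zero, abs_zero]
      positivity
  -- a^{-1/M} ≥ 1
  have hone : (1 : ℝ) ≤ a ^ (-(1 / (M : ℝ))) := by
    have := Real.rpow_le_rpow_of_exponent_ge (y := (0:ℝ)) (z := -(1 / (M : ℝ))) ha0 ha1.le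
      (neg_nonpos.mpr (by positivity))
    rwa [Real.rpow_zero] at this
  -- key bound: ∫ X t * I t ≤ a⁻¹
  have hkey : ∀ t, ∫ ω, X t ω * I t ω ∂μ ≤ a⁻¹ := by
    intro t
    have hm := ℱ.le t
    have h1 : ∫ ω, X t ω * I t ω ∂μ = ∫ ω, (μ[fun ω => X t ω * I t ω|ℱ t]) ω ∂μ :=
      (integral_condExp hm).symm
    have h2 : (μ[fun ω => X t ω * I t ω|ℱ t]) =ᵐ[μ] fun ω => X t ω * (μ[I t|ℱ t]) ω :=
      condExp_mul_of_stronglyMeasurable_left (hXmeas t).stronglyMeasurable (hXIint t) (hIint t)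
    rw [h1, integral_congr_ae h2]
    have h3 : ∀ᵐ ω ∂μ, X t ω * (μ[I t|ℱ t]) ω ≤ a⁻¹ := by
      filter_upwards [hcond t] with ω hω
      have hb : X t ω * (μ[I t|ℱ t]) ω ≤ X t ω * a ^ ((Q t ω : ℝ) / (M : ℝ) - 1) :=
        mul_le_mul_of_nonneg_left hω (hXpos t ω).le
      refine hb.trans_eq ?_
      rw [hX, ← Real.rpow_add ha0,
        show -((Q t ω : ℝ) / (M : ℝ)) + ((Q t ω : ℝ) / (M : ℝ) - 1) = -1 by ring,
        Real.rpow_neg_one]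
    calc ∫ ω, X t ω * (μ[I t|ℱ t]) ω ∂μ ≤ ∫ _, a⁻¹ ∂μ := by
          refine integral_mono_ae ?_ (integrable_const _) h3
          exact Integrable.congr (integrable_condExp) h2
      _ = a⁻¹ := by simp
  -- pointwise recursion identity
  have hrec : ∀ t ω, X (t + 1) ω = X t ω + (a ^ (-(1 / (M : ℝ))) - 1) * (X t ω * I t ω) := by
    intro t ω
    rcases hstep t ω with h | h
    · have hni : ¬ Q (t + 1) ω = Q t ω + 1 := by omega
      simp only [hI, if_neg hni, mul_zero, mul_zero, add_zero, hX, h]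
    · simp only [hI, if_pos h, mul_one, hX, h]
      push_cast
      rw [show -(((Q t ω : ℝ) + 1) / (M : ℝ)) = -((Q t ω : ℝ) / (M : ℝ)) + -(1 / (M : ℝ)) by
        ring, Real.rpow_add ha0]
      ring
  -- induction
  intro T
  induction T with
  | zero =>
    have : ∀ ω, X 0 ω = 1 := by
      intro ω; simp [hX, hQ0 ω]
    simp only [hX] at this ⊢
    rw [show (fun ω => a ^ (-((Q 0 ω : ℝ) / (M : ℝ)))) = fun _ => (1 : ℝ) from funext this]
    simp
  | succ T ih =>
    have hint : ∫ ω, X (T + 1) ω ∂μ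
        = ∫ ω, X T ω ∂μ + (a ^ (-(1 / (M : ℝ))) - 1) * ∫ ω, X T ω * I T ω ∂μ := by
      rw [← integral_const_mul, ← integral_add (hXint T) ((hXIint T).const_mul _)]
      exact integral_congr_ae (Filter.Eventually.of_forall (hrec T))
    have hstep' : ∫ ω, X (T + 1) ω ∂μ ≤ ∫ ω, X T ω ∂μ + c := by
      rw [hint, hc]
      have := mul_le_mul_of_nonneg_left (hkey T) (sub_nonneg.mpr hone)
      nlinarith [this]
    calc ∫ ω, X (T + 1) ω ∂μ ≤ ∫ ω, X T ω ∂μ + c := hstep'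
      _ ≤ c * (T : ℝ) + 1 + c := by linarith [ih]
      _ = c * ((T : ℕ) + 1 : ℝ) + 1 := by ring
      _ = c * ((T + 1 : ℕ) : ℝ) + 1 := by push_cast; ring
end

section
/- Let (Ω, F, (F_t)_{t≥0}, P) be a filtered probability space, M ≥ 1 an integer, and a ∈ (0,1). Let (Q(t))_{t≥0} be an adapted integer-valued process with Q(0) = 0 and Q(t+1) − Q(t) ∈ {0,1}, such that almost surely P(Q(t+1) = Q(t) + 1 | F_t) ≤ a^{Q(t)/M − 1} for every t ≥ 0. Then for every integer T ≥ 0, the expected count satisfies E[Q(T)] ≤ M · ln(a^{−1}·(a^{−1/M} − 1)·T + 1) / ln(1/a). -/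
open MeasureTheory ProbabilityTheory Real

/-- If `(Q(t))` is an adapted counting process with `Q(0) = 0`, increments in `{0,1}`, and
`P(Q(t+1) = Q(t)+1 | F_t) ≤ a^{Q(t)/M − 1}` a.s. for every `t`, then for every `T ≥ 0`:
`E[Q(T)] ≤ M · ln(a⁻¹(a^{−1/M} − 1) T + 1) / ln(1/a)`. -/
theorem statement10 {Ω : Type*} {m0 : MeasurableSpace Ω} (μ : Measure Ω)
    [IsProbabilityMeasure μ] (ℱ : Filtration ℕ m0)
    (M : ℕ) (hM : 1 ≤ M) (a : ℝ) (ha0 : 0 < a) (ha1 : a < 1)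
    (Q : ℕ → Ω → ℕ) (hadapt : ∀ t, Measurable[ℱ t] (Q t))
    (hQ0 : ∀ ω, Q 0 ω = 0)
    (hstep : ∀ t ω, Q (t + 1) ω = Q t ω ∨ Q (t + 1) ω = Q t ω + 1)
    (hcond : ∀ t, ∀ᵐ ω ∂μ,
      (μ[(fun ω' => if Q (t + 1) ω' = Q t ω' + 1 then (1 : ℝ) else 0)|ℱ t]) ω ≤
        a ^ ((Q t ω : ℝ) / (M : ℝ) - 1)) :
    ∀ T : ℕ, ∫ ω, (Q T ω : ℝ) ∂μ ≤
      (M : ℝ) * Real.log (a⁻¹ * (a ^ (-(1 / (M : ℝ))) - 1) * (T : ℝ) + 1) /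
        Real.log (1 / a) := by
  intro T
  set b : ℝ := a ^ (-(1 / (M : ℝ))) with hb_def
  have hMpos : (0:ℝ) < (M:ℝ) := by exact_mod_cast hM
  have hb1 : 1 < b := by
    rw [hb_def]
    refine (Real.one_lt_rpow_iff_of_pos ha0).mpr (Or.inr ⟨ha1, ?_⟩)
    have : (0:ℝ) < 1 / (M:ℝ) := by positivity
    linarith
  have hb0 : 0 < b := lt_trans one_pos hb1
  have hQm : ∀ t, Measurable (Q t) := fun t => (hadapt t).mono (ℱ.le t) le_rfl
  have hgm : ∀ t, Measurable (fun ω => b ^ Q t ω) :=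
    fun t => measurable_from_top.comp (hQm t)
  have hQle : ∀ t ω, Q t ω ≤ t := by
    intro t
    induction t with
    | zero => intro ω; simp [hQ0 ω]
    | succ n ih => intro ω; rcases hstep n ω with h | h <;> rw [h] <;> have := ih ω <;> omega
  have hgle : ∀ t ω, ‖b ^ Q t ω‖ ≤ b ^ t := fun t ω => by
    rw [Real.norm_eq_abs, abs_of_pos (pow_pos hb0 _)]
    exact pow_le_pow_right₀ hb1.le (hQle t ω)
  have hgint : ∀ t, Integrable (fun ω => b ^ Q t ω) μ := fun t =>
    (integrable_const (b ^ t)).mono' (hgm t).aestronglyMeasurable (ae_of_all _ (hgle t))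
  set I : ℕ → Ω → ℝ := fun t ω => if Q (t + 1) ω = Q t ω + 1 then (1:ℝ) else 0 with hI_def
  have hIm : ∀ t, Measurable (I t) := by
    intro t
    exact Measurable.ite
      (measurableSet_eq_fun (hQm (t+1)) ((hQm t).add measurable_const))
      measurable_const measurable_const
  have hIint : ∀ t, Integrable (I t) μ := fun t =>
    (integrable_const (1:ℝ)).mono' (hIm t).aestronglyMeasurable
      (ae_of_all _ fun ω => by simp only [hI_def]; split <;> simp)
  have hprod_int : ∀ t, Integrable (fun ω => b ^ Q t ω * I t ω) μ := fun t =>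
    (hIint t).bdd_mul (hgm t).aestronglyMeasurable (ae_of_all _ (hgle t))
  have hbn : ∀ (n : ℕ), b ^ n = a ^ ((-(1 / (M:ℝ))) * n) := by
    intro n
    rw [← Real.rpow_natCast b n, hb_def, ← Real.rpow_mul ha0.le]
  have hpull : ∀ t, ∫ ω, b ^ Q t ω * I t ω ∂μ ≤ a⁻¹ := by
    intro t
    have hfm : StronglyMeasurable[ℱ t] (fun ω => b ^ Q t ω) :=
      (measurable_from_top.comp (hadapt t)).stronglyMeasurable
    have hpl := condExp_mul_of_stronglyMeasurable_left (μ := μ) hfm (hprod_int t) (hIint t)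
    calc ∫ ω, b ^ Q t ω * I t ω ∂μ
        = ∫ ω, (μ[(fun ω => b ^ Q t ω) * I t|ℱ t]) ω ∂μ :=
          (integral_condExp (ℱ.le t)).symm
      _ = ∫ ω, b ^ Q t ω * (μ[I t|ℱ t]) ω ∂μ := integral_congr_ae hpl
      _ ≤ ∫ _ω, (a:ℝ)⁻¹ ∂μ := by
          refine integral_mono_ae
            (integrable_condExp.bdd_mul (hgm t).aestronglyMeasurable (ae_of_all _ (hgle t)))
            (integrable_const _) ?_
          filter_upwards [hcond t] with ω hω
          calc b ^ Q t ω * (μ[I t|ℱ t]) ω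
              ≤ b ^ Q t ω * a ^ ((Q t ω : ℝ) / (M:ℝ) - 1) :=
                mul_le_mul_of_nonneg_left hω (pow_nonneg hb0.le _)
            _ = a⁻¹ := by
                rw [hbn (Q t ω), ← Real.rpow_add ha0, ← Real.rpow_neg_one a]
                congr 1
                ring
      _ = a⁻¹ := by simp
  have hE : ∀ t, ∫ ω, b ^ Q t ω ∂μ ≤ (b - 1) * a⁻¹ * t + 1 := by
    intro t
    induction t with
    | zero => simp [hQ0]
    | succ n ih =>
      have hptwise : ∀ ω, b ^ Q (n+1) ω = b ^ Q n ω + (b-1) * (b ^ Q n ω * I n ω) := by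
        intro ω
        simp only [hI_def]
        rcases hstep n ω with h | h
        · rw [h, if_neg (by omega)]; ring
        · rw [h, if_pos rfl, pow_succ]; ring
      have hb1' : (0:ℝ) ≤ b - 1 := by linarith
      calc ∫ ω, b ^ Q (n+1) ω ∂μ
          = ∫ ω, (b ^ Q n ω + (b-1) * (b ^ Q n ω * I n ω)) ∂μ :=
            integral_congr_ae (ae_of_all _ hptwise)
        _ = (∫ ω, b ^ Q n ω ∂μ) + (b-1) * ∫ ω, b ^ Q n ω * I n ω ∂μ := by
            rw [integral_add (hgint n) ((hprod_int n).const_mul _), integral_const_mul]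
        _ ≤ ((b-1) * a⁻¹ * n + 1) + (b-1) * a⁻¹ :=
            add_le_add ih (mul_le_mul_of_nonneg_left (hpull n) hb1')
        _ = (b-1) * a⁻¹ * (n+1 : ℕ) + 1 := by push_cast; ring
  set c := ∫ ω, b ^ Q T ω ∂μ with hc
  have hc1 : (1:ℝ) ≤ c := by
    rw [hc]
    calc (1:ℝ) = ∫ _ω, (1:ℝ) ∂μ := by simp
      _ ≤ ∫ ω, b ^ Q T ω ∂μ :=
        integral_mono (integrable_const 1) (hgint T) (fun ω => one_le_pow₀ hb1.le)
  have hc0 : (0:ℝ) < c := lt_of_lt_of_le one_pos hc1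
  have hL : (0:ℝ) < Real.log (1/a) := by
    apply Real.log_pos
    rw [lt_div_iff₀ ha0]
    linarith
  have hla : Real.log a ≠ 0 := ne_of_lt (Real.log_neg ha0 ha1)
  have hid : ∀ ω, (Q T ω : ℝ) = (M:ℝ) / Real.log (1/a) * Real.log (b ^ Q T ω) := by
    intro ω
    rw [Real.log_pow, hb_def, Real.log_rpow ha0, one_div, Real.log_inv]
    field_simp
  have hlogm : Measurable (fun ω => Real.log (b ^ Q T ω)) :=
    (measurable_from_top (f := fun n : ℕ => Real.log (b ^ n))).comp (hQm T)
  have hlogint : Integrable (fun ω => Real.log (b ^ Q T ω)) μ := by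
    refine (integrable_const (|Real.log b| * T)).mono' hlogm.aestronglyMeasurable
      (ae_of_all _ fun ω => ?_)
    rw [Real.log_pow, Real.norm_eq_abs, abs_mul, Nat.abs_cast, mul_comm]
    have : (Q T ω : ℝ) ≤ (T : ℝ) := by exact_mod_cast hQle T ω
    have := abs_nonneg (Real.log b)
    nlinarith
  have hjensen : ∫ ω, Real.log (b ^ Q T ω) ∂μ ≤ Real.log c := by
    have hpt : ∀ ω, Real.log (b ^ Q T ω) ≤ Real.log c + (b ^ Q T ω / c - 1) := by
      intro ω
      have hx : (0:ℝ) < b ^ Q T ω / c := div_pos (pow_pos hb0 _) hc0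
      have h := Real.log_le_sub_one_of_pos hx
      rw [Real.log_div (pow_pos hb0 _).ne' hc0.ne'] at h
      linarith
    have hint1 : Integrable (fun ω => b ^ Q T ω / c - 1) μ := by
      exact ((hgint T).div_const c).sub (integrable_const 1)
    have hint0 : Integrable (fun ω => Real.log c + (b ^ Q T ω / c - 1)) μ := by
      exact (integrable_const _).add hint1
    calc ∫ ω, Real.log (b ^ Q T ω) ∂μ
        ≤ ∫ ω, (Real.log c + (b ^ Q T ω / c - 1)) ∂μ :=
          integral_mono hlogint hint0 hpt
      _ = Real.log c + (c / c - 1) := by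
          rw [integral_add (integrable_const _) hint1,
            integral_sub (by exact (hgint T).div_const c) (integrable_const 1), integral_div]
          simp [hc]
      _ = Real.log c := by rw [div_self hc0.ne']; ring
  calc ∫ ω, (Q T ω : ℝ) ∂μ
      = (M:ℝ) / Real.log (1/a) * ∫ ω, Real.log (b ^ Q T ω) ∂μ := by
        rw [← integral_const_mul]
        exact integral_congr_ae (ae_of_all _ fun ω => hid ω)
    _ ≤ (M:ℝ) / Real.log (1/a) * Real.log ((b-1) * a⁻¹ * T + 1) := by
        refine mul_le_mul_of_nonneg_left ?_ (div_nonneg hMpos.le hL.le)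
        exact le_trans hjensen (Real.log_le_log hc0 (hE T))
    _ = (M:ℝ) * Real.log (a⁻¹ * (b - 1) * (T:ℝ) + 1) / Real.log (1/a) := by
        rw [mul_comm (b-1) a⁻¹]
        ring
end
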